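/- Let a, b, c ∈ ℂ with Re a > 0 and Re(c−a) > 0, and let z ∈ ℂ with |z| < 1. Then the integral ∫₁^∞ t^{b−c} (t−1)^{c−a−1} (t−z)^{−b} dt (integrand defined via principal branches, which apply since Re(t−z) > 0 and t, t−1 > 0 for t > 1) converges and equals ∑_{n=0}^∞ Γ(a+n) Γ(c−a) (b)_n z^n / (Γ(c+n) n!); in particular, when c ∉ {0,−1,−2,…} it equals (Γ(a)Γ(c−a)/Γ(c)) · F(a,b;c;z). -/

import Mathlib

open Complex MeasureTheory
open scoped ENNReal NNReal

lemma aux_ofReal_mul_cpow {x : ℝ} (hx : 0 < x) (y s : ℂ) :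
    ((x : ℂ) * y) ^ s = (x : ℂ) ^ s * y ^ s := by
  rcases eq_or_ne y 0 with rfl | hy
  · rcases eq_or_ne s 0 with rfl | hs
    · simp
    · simp [Complex.zero_cpow hs]
  have hx0 : (x : ℂ) ≠ 0 := by exact_mod_cast hx.ne'
  rw [Complex.cpow_def_of_ne_zero (mul_ne_zero hx0 hy),
    Complex.cpow_def_of_ne_zero hx0, Complex.cpow_def_of_ne_zero hy,
    Complex.log_ofReal_mul hx hy, add_mul, Complex.exp_add,
    Complex.ofReal_log hx.le]

lemma aux_poch_norm_le (b : ℂ) (n : ℕ) :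
    ‖(ascPochhammer ℂ n).eval b‖ ≤ (ascPochhammer ℝ n).eval (‖b‖ + 1) := by
  induction n with
  | zero => simp
  | succ n ih =>
    rw [ascPochhammer_succ_eval, ascPochhammer_succ_eval, norm_mul]
    have h1 : ‖b + (n : ℂ)‖ ≤ ‖b‖ + 1 + n := by
      calc ‖b + (n : ℂ)‖ ≤ ‖b‖ + ‖(n : ℂ)‖ := norm_add_le _ _
      _ ≤ ‖b‖ + 1 + n := by rw [Complex.norm_natCast]; linarith
    have h2 : (0:ℝ) ≤ ‖b‖ + 1 + n := by positivity
    calc ‖(ascPochhammer ℂ n).eval b‖ * ‖b + (n:ℂ)‖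
        ≤ (ascPochhammer ℝ n).eval (‖b‖+1) * (‖b‖ + 1 + n) := by
          apply mul_le_mul ih h1 (norm_nonneg _)
          exact le_trans (norm_nonneg _) ih
      _ = (ascPochhammer ℝ n).eval (‖b‖+1) * (‖b‖ + 1 + n) := rfl

lemma aux_summable {q r : ℝ} (hq : 0 < q) (hr0 : 0 < r) (hr1 : r < 1) :
    Summable (fun n : ℕ => (ascPochhammer ℝ n).eval q / n.factorial * (n + 1) * r ^ n) := by
  have hpos : ∀ n : ℕ, 0 < (ascPochhammer ℝ n).eval q / n.factorial * (n + 1) * r ^ n := by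
    intro n
    have := ascPochhammer_pos n q hq
    have : (0:ℝ) < (ascPochhammer ℝ n).eval q / n.factorial := by positivity
    positivity
  apply summable_of_ratio_test_tendsto_lt_one hr1
    (Filter.Eventually.of_forall fun n => (hpos n).ne')
  have hratio : ∀ n : ℕ,
      ‖(ascPochhammer ℝ (n+1)).eval q / (n+1).factorial * ((n+1:ℕ) + 1) * r ^ (n+1)‖ /
        ‖(ascPochhammer ℝ n).eval q / n.factorial * (n + 1) * r ^ n‖
      = (q + n) / (n + 1) * ((n + 2) / (n + 1)) * r := by
    intro n
    rw [Real.norm_of_nonneg (hpos (n+1)).le, Real.norm_of_nonneg (hpos n).le]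
    rw [ascPochhammer_succ_eval, Nat.factorial_succ]
    push_cast
    have hfac : ((n.factorial : ℝ)) ≠ 0 := by exact_mod_cast n.factorial_ne_zero
    have hP := (ascPochhammer_pos n q hq).ne'
    have hr := hr0.ne'
    have hn1 : ((n:ℝ) + 1) ≠ 0 := by positivity
    field_simp
    ring
  simp_rw [hratio]
  have h1 : Filter.Tendsto (fun n : ℕ => (q + n) / (n + 1)) Filter.atTop (nhds 1) := by
    have : (fun n : ℕ => (q + n) / (n + 1)) = fun n : ℕ => (q - 1) * (1 / (n + 1)) + 1 := by
      funext n
      have hn1 : ((n:ℝ) + 1) ≠ 0 := by positivity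
      field_simp
      ring
    rw [this]
    have := (tendsto_one_div_add_atTop_nhds_zero_nat.const_mul (q - 1)).add_const 1
    simpa using this
  have h2 : Filter.Tendsto (fun n : ℕ => ((n:ℝ) + 2) / (n + 1)) Filter.atTop (nhds 1) := by
    have : (fun n : ℕ => ((n:ℝ) + 2) / (n + 1)) = fun n : ℕ => 1 / ((n:ℝ) + 1) + 1 := by
      funext n
      have hn1 : ((n:ℝ) + 1) ≠ 0 := by positivity
      field_simp
      ring
    rw [this]
    have := (tendsto_one_div_add_atTop_nhds_zero_nat (𝕜 := ℝ)).add_const 1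
    simpa using this
  have := (h1.mul h2).mul_const r
  simpa using this

noncomputable def bcoef (b : ℂ) (n : ℕ) : ℂ := (ascPochhammer ℂ n).eval b / n.factorial

lemma bcoef_rec (b : ℂ) (n : ℕ) : bcoef b (n + 1) * (n + 1) = bcoef b n * (b + n) := by
  have hfac : ((n.factorial : ℂ)) ≠ 0 := by exact_mod_cast n.factorial_ne_zero
  have hn1 : ((n : ℂ) + 1) ≠ 0 := by
    exact_mod_cast (Nat.cast_add_one_ne_zero (R := ℂ) n)
  simp only [bcoef, ascPochhammer_succ_eval, Nat.factorial_succ]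
  push_cast
  field_simp

lemma bcoef_norm_le (b : ℂ) (n : ℕ) :
    ‖bcoef b n‖ ≤ (ascPochhammer ℝ n).eval (‖b‖ + 1) / n.factorial := by
  rw [bcoef, norm_div, Complex.norm_natCast]
  have hfac : (0:ℝ) < n.factorial := by exact_mod_cast n.factorial_pos
  gcongr
  exact aux_poch_norm_le b n

lemma bcoef_norm_summable (b : ℂ) {y : ℂ} (hy : ‖y‖ < 1) :
    Summable (fun n : ℕ => ‖bcoef b n * y ^ n‖) := by
  set r : ℝ := (‖y‖ + 1) / 2 with hr
  have hr0 : 0 < r := by positivity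
  have hr1 : r < 1 := by rw [hr]; linarith
  have hyr : ‖y‖ ≤ r := by rw [hr]; linarith
  apply Summable.of_nonneg_of_le (fun n => norm_nonneg _) ?_
    (aux_summable (by positivity : (0:ℝ) < ‖b‖ + 1) hr0 hr1)
  intro n
  rw [norm_mul, norm_pow]
  calc ‖bcoef b n‖ * ‖y‖ ^ n
      ≤ ((ascPochhammer ℝ n).eval (‖b‖+1) / n.factorial) * r ^ n := by
        apply mul_le_mul (bcoef_norm_le b n) (pow_le_pow_left₀ (norm_nonneg _) hyr n)
          (by positivity) (le_trans (norm_nonneg _) (bcoef_norm_le b n))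
    _ ≤ ((ascPochhammer ℝ n).eval (‖b‖+1) / n.factorial) * (n+1) * r ^ n := by
        have h1 : (0:ℝ) < (ascPochhammer ℝ n).eval (‖b‖+1) / n.factorial := by
          have := ascPochhammer_pos n (‖b‖+1) (by positivity)
          have h2 : (0:ℝ) < n.factorial := by exact_mod_cast n.factorial_pos
          positivity
        have h3 : (ascPochhammer ℝ n).eval (‖b‖+1) / n.factorial
            ≤ (ascPochhammer ℝ n).eval (‖b‖+1) / n.factorial * (n+1) := by nlinarith
        exact mul_le_mul_of_nonneg_right h3 (pow_nonneg hr0.le n)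

lemma bcoef_summable (b : ℂ) {y : ℂ} (hy : ‖y‖ < 1) :
    Summable (fun n : ℕ => bcoef b n * y ^ n) :=
  (bcoef_norm_summable b hy).of_norm

lemma bcoef_deriv_summable (b : ℂ) {r : ℝ} (hr0 : 0 < r) (hr1 : r < 1) :
    Summable (fun n : ℕ => (ascPochhammer ℝ n).eval (‖b‖+1) / n.factorial * (n+1) * r ^ n / r) :=
  (aux_summable (by positivity) hr0 hr1).div_const r

lemma bcoef_deriv_bound (b : ℂ) {r : ℝ} (hr0 : 0 < r) {x : ℂ} (hx : ‖x‖ ≤ r) (n : ℕ) :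
    ‖bcoef b n * (n * x ^ (n - 1))‖
      ≤ (ascPochhammer ℝ n).eval (‖b‖+1) / n.factorial * (n+1) * r ^ n / r := by
  have hP : (0:ℝ) ≤ (ascPochhammer ℝ n).eval (‖b‖+1) / n.factorial := by
    have := ascPochhammer_pos n (‖b‖+1) (by positivity)
    have h2 : (0:ℝ) < n.factorial := by exact_mod_cast n.factorial_pos
    positivity
  match n with
  | 0 => simpa using by positivity
  | (m+1) =>
    rw [norm_mul, norm_mul, norm_pow, Complex.norm_natCast]
    simp only [Nat.add_sub_cancel]
    have hb := bcoef_norm_le b (m+1)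
    calc ‖bcoef b (m+1)‖ * ((m+1 : ℕ) * ‖x‖ ^ m)
        ≤ ((ascPochhammer ℝ (m+1)).eval (‖b‖+1) / (m+1).factorial) * ((m+1 : ℕ) * r ^ m) := by
          apply mul_le_mul hb _ (by positivity) hP
          have := pow_le_pow_left₀ (norm_nonneg x) hx m
          gcongr
      _ ≤ (ascPochhammer ℝ (m+1)).eval (‖b‖+1) / (m+1).factorial * ((m+1:ℕ)+1) * r ^ (m+1) / r
          := by
          have hrr : (ascPochhammer ℝ (m+1)).eval (‖b‖+1) / (m+1).factorial * ((m+1:ℕ)+1)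
              * r ^ (m+1) / r
              = (ascPochhammer ℝ (m+1)).eval (‖b‖+1) / (m+1).factorial * ((m+1:ℕ)+1) * r ^ m := by
            rw [pow_succ]
            field_simp
          rw [hrr]
          have hrm : (0:ℝ) ≤ r ^ m := by positivity
          push_cast
          nlinarith

lemma bcoef_hasDerivAt (b : ℂ) {y : ℂ} (hy : ‖y‖ < 1) :
    HasDerivAt (fun w => ∑' n : ℕ, bcoef b n * w ^ n)
      (∑' n : ℕ, bcoef b n * (n * y ^ (n - 1))) y := by
  set r : ℝ := (‖y‖ + 1) / 2 with hr
  have hr0 : 0 < r := by positivity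
  have hr1 : r < 1 := by rw [hr]; linarith
  have hyr : ‖y‖ < r := by rw [hr]; linarith
  apply hasDerivAt_tsum_of_isPreconnected (bcoef_deriv_summable b hr0 hr1)
    (Metric.isOpen_ball (x := (0:ℂ)) (ε := r))
    ((convex_ball (0:ℂ) r).isPreconnected)
    (fun n x _ => (hasDerivAt_pow n x).const_mul (bcoef b n))
    (fun n x hx => bcoef_deriv_bound b hr0 (le_of_lt (mem_ball_zero_iff.mp hx)) n)
    (Metric.mem_ball_self hr0)
    (bcoef_summable b (by simpa using zero_lt_one))
    (mem_ball_zero_iff.mpr hyr)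

lemma bcoef_ode (b : ℂ) {y : ℂ} (hy : ‖y‖ < 1) :
    (1 - y) * (∑' n : ℕ, bcoef b n * (n * y ^ (n - 1)))
      = b * ∑' n : ℕ, bcoef b n * y ^ n := by
  set r : ℝ := (‖y‖ + 1) / 2 with hr
  have hr0 : 0 < r := by positivity
  have hr1 : r < 1 := by rw [hr]; linarith
  have hyr : ‖y‖ ≤ r := by rw [hr]; linarith
  have hsA : Summable (fun n : ℕ => bcoef b n * (n * y ^ (n - 1))) :=
    Summable.of_norm_bounded (bcoef_deriv_summable b hr0 hr1)
      (fun n => bcoef_deriv_bound b hr0 hyr n)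
  set A := ∑' n : ℕ, bcoef b n * (n * y ^ (n - 1)) with hA
  have hAsum : HasSum (fun n : ℕ => bcoef b n * (n * y ^ (n - 1))) A := hsA.hasSum
  have h1 : HasSum (fun n : ℕ => bcoef b n * (b + n) * y ^ n) A := by
    have := (hasSum_nat_add_iff' (f := fun n : ℕ => bcoef b n * (n * y ^ (n - 1))) 1).mpr hAsum
    simp only [Finset.range_one, Finset.sum_singleton, Nat.cast_zero, zero_mul, mul_zero,
      sub_zero] at this
    have heq : (fun n : ℕ => bcoef b (n+1) * (↑(n+1) * y ^ (n+1-1)))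
        = fun n : ℕ => bcoef b n * (b+n) * y^n := by
      funext n
      have hrec := bcoef_rec b n
      simp only [Nat.add_sub_cancel]
      push_cast
      linear_combination y ^ n * hrec
    exact heq ▸ this
  have h2 : HasSum (fun n : ℕ => bcoef b n * n * y ^ n) (y * A) := by
    have := hAsum.mul_left y
    have heq : (fun n : ℕ => y * (bcoef b n * (n * y ^ (n-1))))
        = fun n : ℕ => bcoef b n * n * y ^ n := by
      funext n
      match n with
      | 0 => simp
      | (m+1) =>
        simp only [Nat.add_sub_cancel]
        push_cast
        rw [pow_succ]
        ring
    exact heq ▸ this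
  have h3 := h1.sub h2
  have h4 : HasSum (fun n : ℕ => b * (bcoef b n * y ^ n))
      (b * ∑' n : ℕ, bcoef b n * y ^ n) := (bcoef_summable b hy).hasSum.mul_left b
  have heq3 : (fun n : ℕ => bcoef b n * (b+n) * y^n - bcoef b n * n * y ^ n)
      = fun n : ℕ => b * (bcoef b n * y ^ n) := by
    funext n; ring
  rw [heq3] at h3
  have := h4.unique h3
  rw [this]
  ring


lemma binomial_hasSum (b w : ℂ) (hw : ‖w‖ < 1) :
    HasSum (fun n : ℕ => (ascPochhammer ℂ n).eval b * w ^ n / n.factorial)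
      ((1 - w) ^ (-b)) := by
  set f : ℂ → ℂ := fun y => ∑' n : ℕ, bcoef b n * y ^ n with hf
  have hslit : ∀ y : ℂ, ‖y‖ < 1 → (1 - y) ∈ Complex.slitPlane := by
    intro y hy
    rw [Complex.mem_slitPlane_iff]
    left
    simp only [Complex.sub_re, Complex.one_re]
    have h1 : y.re ≤ ‖y‖ := by
      have := Complex.abs_re_le_norm y
      exact (le_abs_self y.re).trans this
    linarith
  have hne : ∀ y : ℂ, ‖y‖ < 1 → (1 : ℂ) - y ≠ 0 :=
    fun y hy => Complex.slitPlane_ne_zero (hslit y hy)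
  have hF0 : ∀ y ∈ Metric.ball (0:ℂ) 1,
      HasDerivAt (fun y => (1 - y) ^ b * f y) 0 y := by
    intro y hy
    rw [mem_ball_zero_iff] at hy
    have d0 : HasDerivAt (fun y : ℂ => 1 - y) (-1) y := by
      simpa using (hasDerivAt_id y).const_sub 1
    have d1 : HasDerivAt (fun y : ℂ => (1 - y) ^ b)
        (b * (1 - y) ^ (b - 1) * -1) y := d0.cpow_const (hslit y hy)
    have d2 := bcoef_hasDerivAt b hy
    have := d1.mul d2
    refine this.congr_deriv ?_
    have hpow : (1 - y) ^ (b - 1) * (1 - y) = (1 - y) ^ b := by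
      nth_rewrite 2 [← Complex.cpow_one (1 - y)]
      rw [← Complex.cpow_add _ _ (hne y hy), sub_add_cancel]
    rw [← hpow]
    have hode := bcoef_ode b hy
    linear_combination (((1:ℂ) - y) ^ (b - 1)) * hode
  have hconst : ∀ y ∈ Metric.ball (0:ℂ) 1,
      (1 - y) ^ b * f y = (1 - (0:ℂ)) ^ b * f 0 := by
    intro y hy
    apply (convex_ball (0:ℂ) 1).is_const_of_fderivWithin_eq_zero (𝕜 := ℂ)
      (f := fun y => (1 - y) ^ b * f y)
    · intro x hx
      exact ((hF0 x hx).differentiableAt).differentiableWithinAt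
    · intro x hx
      rw [fderivWithin_of_isOpen Metric.isOpen_ball hx]
      have := (hF0 x hx).hasFDerivAt.fderiv
      rw [this]
      ext v
      simp
    · exact hy
    · exact mem_ball_zero_iff.mpr (by simpa using zero_lt_one)
  have hf0 : f 0 = 1 := by
    show (∑' n : ℕ, bcoef b n * (0:ℂ) ^ n) = 1
    have : HasSum (fun n : ℕ => bcoef b n * (0:ℂ) ^ n) (bcoef b 0 * (0:ℂ) ^ 0) := by
      apply hasSum_single 0
      intro n hn
      simp [zero_pow hn]
    rw [this.tsum_eq]
    simp [bcoef]
  have key : (1 - w) ^ b * f w = 1 := by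
    rw [hconst w (mem_ball_zero_iff.mpr hw), hf0]
    simp
  have hfw : (∑' n : ℕ, bcoef b n * w ^ n) = (1 - w) ^ (-b) := by
    rw [Complex.cpow_neg]
    exact eq_inv_of_mul_eq_one_left (by linear_combination key)
  have hsum := hfw ▸ (bcoef_summable b hw).hasSum
  have heq : (fun n : ℕ => (ascPochhammer ℂ n).eval b * w ^ n / n.factorial)
      = fun n : ℕ => bcoef b n * w ^ n := by
    funext n
    rw [bcoef, div_mul_eq_mul_div]
  rw [heq]
  exact hsum

open Set

lemma betaIoi (u v : ℂ) (hu : 0 < u.re) (hv : 0 < v.re) :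
    IntegrableOn (fun t : ℝ => (t : ℂ) ^ (-(u+v)) * ((t : ℂ) - 1) ^ (v-1)) (Set.Ioi 1) ∧
    (∫ t in Set.Ioi (1:ℝ), (t : ℂ) ^ (-(u+v)) * ((t : ℂ) - 1) ^ (v-1))
      = Complex.Gamma u * Complex.Gamma v / Complex.Gamma (u+v) := by
  have himg : (fun x : ℝ => x⁻¹) '' Set.Ioo 0 1 = Set.Ioi 1 := by
    ext y
    constructor
    · rintro ⟨x, ⟨hx0, hx1⟩, rfl⟩
      exact (one_lt_inv_iff₀).mpr ⟨hx0, hx1⟩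
    · intro hy
      have hy1 : (1:ℝ) < y := hy
      refine ⟨y⁻¹, ⟨by positivity, ?_⟩, inv_inv y⟩
      exact inv_lt_one_of_one_lt₀ hy1
  have hderiv : ∀ x ∈ Set.Ioo (0:ℝ) 1,
      HasDerivWithinAt (fun x : ℝ => x⁻¹) (-(x^2)⁻¹) (Set.Ioo 0 1) x :=
    fun x hx => (hasDerivAt_inv hx.1.ne').hasDerivWithinAt
  have hinj : Set.InjOn (fun x : ℝ => x⁻¹) (Set.Ioo 0 1) := inv_injective.injOn
  have hkey : ∀ x ∈ Set.Ioo (0:ℝ) 1,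
      |(-(x^2)⁻¹)| • ((((x⁻¹ : ℝ)) : ℂ) ^ (-(u+v)) * (((x⁻¹ : ℝ) : ℂ) - 1) ^ (v-1))
        = (x : ℂ) ^ (u-1) * (1 - (x : ℂ)) ^ (v-1) := by
    intro x hx
    obtain ⟨hx0, hx1⟩ := hx
    have hxC : (x : ℂ) ≠ 0 := by exact_mod_cast hx0.ne'
    have harg : (x : ℂ).arg ≠ Real.pi := by
      rw [Complex.arg_ofReal_of_nonneg hx0.le]
      exact Real.pi_ne_zero.symm
    have habs : |(-(x^2)⁻¹)| = (x^2)⁻¹ := by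
      rw [abs_neg, abs_inv, abs_of_pos (by positivity)]
    rw [habs]
    -- first factor
    have e1 : (((x⁻¹ : ℝ)) : ℂ) ^ (-(u+v)) = (x : ℂ) ^ (u+v) := by
      rw [Complex.ofReal_inv, Complex.inv_cpow _ _ harg, ← Complex.cpow_neg, neg_neg]
    -- second factor
    have e2 : (((x⁻¹ : ℝ) : ℂ) - 1) ^ (v-1)
        = ((1 - x : ℝ) : ℂ) ^ (v-1) * ((x:ℂ) ^ (v-1))⁻¹ := by
      have : ((x⁻¹ : ℝ) : ℂ) - 1 = (((1 - x) * x⁻¹ : ℝ) : ℂ) := by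
        push_cast
        field_simp
      rw [this, Complex.ofReal_mul,
        Complex.mul_cpow_ofReal_nonneg (by linarith) (by positivity),
        Complex.ofReal_inv, Complex.inv_cpow _ _ harg]
    have e3 : ((((x^2 : ℝ))⁻¹ : ℝ) : ℂ) = ((x : ℂ) ^ ((2:ℕ) : ℂ))⁻¹ := by
      push_cast
      norm_num
    have e4 : ((x:ℂ) ^ ((2:ℕ):ℂ))⁻¹ * ((x:ℂ)^(u+v) * ((x:ℂ)^(v-1))⁻¹) = (x:ℂ)^(u-1) := by
      rw [← Complex.cpow_neg, ← Complex.cpow_neg, ← Complex.cpow_add _ _ hxC,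
        ← Complex.cpow_add _ _ hxC]
      congr 1
      push_cast
      ring
    rw [e1, e2, Complex.real_smul, e3,
      show (1 - (x:ℂ)) = ((1 - x : ℝ) : ℂ) by push_cast; ring]
    linear_combination (((1 - x : ℝ)) : ℂ) ^ (v-1) * e4
  have hmeas : MeasurableSet (Set.Ioo (0:ℝ) 1) := measurableSet_Ioo
  have hbeta_conv : IntegrableOn (fun x : ℝ => (x:ℂ)^(u-1) * (1 - (x:ℂ))^(v-1)) (Set.Ioo 0 1) := by
    have := Complex.betaIntegral_convergent hu hv
    rw [intervalIntegrable_iff_integrableOn_Ioc_of_le zero_le_one] at this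
    exact this.mono_set Set.Ioo_subset_Ioc_self
  have hint : IntegrableOn
      (fun t : ℝ => (t : ℂ) ^ (-(u+v)) * ((t : ℂ) - 1) ^ (v-1)) (Set.Ioi 1) := by
    rw [← himg, integrableOn_image_iff_integrableOn_abs_deriv_smul hmeas hderiv hinj]
    exact hbeta_conv.congr_fun (fun x hx => (hkey x hx).symm) hmeas
  refine ⟨hint, ?_⟩
  have hval : (∫ t in Set.Ioi (1:ℝ), (t : ℂ) ^ (-(u+v)) * ((t : ℂ) - 1) ^ (v-1))
      = Complex.betaIntegral u v := by
    rw [← himg, integral_image_eq_integral_abs_deriv_smul hmeas hderiv hinj,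
      setIntegral_congr_fun hmeas (fun x hx => hkey x hx),
      Complex.betaIntegral, intervalIntegral.integral_of_le zero_le_one]
    exact setIntegral_congr_set Ioo_ae_eq_Ioc
  rw [hval]
  have h2 : Complex.Gamma (u+v) ≠ 0 :=
    Complex.Gamma_ne_zero_of_re_pos (by rw [Complex.add_re]; linarith)
  rw [eq_div_iff h2]
  linear_combination -Complex.Gamma_mul_Gamma_eq_betaIntegral hu hv

lemma hyper_coef_norm_summable (b z : ℂ) (hz : ‖z‖ < 1) :
    Summable (fun n : ℕ => ‖(ascPochhammer ℂ n).eval b * z ^ n / n.factorial‖) := by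
  apply (bcoef_norm_summable b hz).congr
  intro n
  rw [bcoef, div_mul_eq_mul_div]

lemma hyper_pt (a b c z : ℂ) (hz : ‖z‖ < 1) {t : ℝ} (ht : 1 < t) :
    HasSum (fun n : ℕ => (ascPochhammer ℂ n).eval b * z ^ n / n.factorial *
        ((t:ℂ) ^ (-(c+(n:ℂ))) * ((t:ℂ) - 1) ^ (c-a-1)))
      ((t:ℂ) ^ (b-c) * ((t:ℂ) - 1) ^ (c-a-1) * ((t:ℂ) - z) ^ (-b)) := by
  have ht0 : (0:ℝ) < t := lt_trans one_pos ht
  have htC : (t:ℂ) ≠ 0 := by exact_mod_cast ht0.ne'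
  have htn : ‖(t:ℂ)‖ = t := by
    rw [Complex.norm_real]
    exact Real.norm_of_nonneg ht0.le
  have hw : ‖z / (t:ℂ)‖ < 1 := by
    rw [norm_div, htn, div_lt_one ht0]
    exact lt_of_lt_of_le hz (le_of_lt ht)
  have h := (binomial_hasSum b (z / (t:ℂ)) hw).mul_left
    ((t:ℂ) ^ (b-c) * ((t:ℂ) - 1) ^ (c-a-1) * (t:ℂ) ^ (-b))
  have hsumeq : (t:ℂ) ^ (b-c) * ((t:ℂ) - 1) ^ (c-a-1) * (t:ℂ) ^ (-b)
        * (1 - z/(t:ℂ)) ^ (-b)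
      = (t:ℂ) ^ (b-c) * ((t:ℂ) - 1) ^ (c-a-1) * ((t:ℂ) - z) ^ (-b) := by
    have hmul : ((t:ℝ):ℂ) * (1 - z/(t:ℂ)) = (t:ℂ) - z := by field_simp
    rw [← hmul, aux_ofReal_mul_cpow ht0]
    ring
  have hterm : (fun n : ℕ => (t:ℂ) ^ (b-c) * ((t:ℂ) - 1) ^ (c-a-1) * (t:ℂ) ^ (-b) *
        ((ascPochhammer ℂ n).eval b * (z/(t:ℂ)) ^ n / n.factorial))
      = fun n : ℕ => (ascPochhammer ℂ n).eval b * z ^ n / n.factorial *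
        ((t:ℂ) ^ (-(c+(n:ℂ))) * ((t:ℂ) - 1) ^ (c-a-1)) := by
    funext n
    have e12 : (z/(t:ℂ)) ^ n = z ^ n * (t:ℂ) ^ (-(n:ℂ)) := by
      rw [div_pow, div_eq_mul_inv, ← Complex.cpow_natCast (t:ℂ) n, ← Complex.cpow_neg]
    have e3 : (t:ℂ) ^ (b-c) * (t:ℂ) ^ (-b) * (t:ℂ) ^ (-(n:ℂ)) = (t:ℂ) ^ (-(c+(n:ℂ))) := by
      rw [← Complex.cpow_add _ _ htC, ← Complex.cpow_add _ _ htC]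
      congr 1
      ring
    rw [e12]
    linear_combination (((t:ℂ) - 1) ^ (c-a-1) * (ascPochhammer ℂ n).eval b * z ^ n
      / n.factorial) * e3
  rw [hterm, hsumeq] at h
  exact h

lemma hyper_norm_bound (a b c z : ℂ) (n : ℕ) {t : ℝ} (ht : 1 < t) :
    ‖(ascPochhammer ℂ n).eval b * z ^ n / n.factorial *
        ((t:ℂ) ^ (-(c+(n:ℂ))) * ((t:ℂ) - 1) ^ (c-a-1))‖
      ≤ ‖(ascPochhammer ℂ n).eval b * z ^ n / n.factorial‖ *
        ‖(t:ℂ) ^ (-(c+((0:ℕ):ℂ))) * ((t:ℂ) - 1) ^ (c-a-1)‖ := by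
  have ht0 : (0:ℝ) < t := lt_trans one_pos ht
  have hX : ‖(t:ℂ) ^ (-(c+(n:ℂ)))‖ ≤ ‖(t:ℂ) ^ (-(c+((0:ℕ):ℂ)))‖ := by
    rw [Complex.norm_cpow_eq_rpow_re_of_pos ht0,
      Complex.norm_cpow_eq_rpow_re_of_pos ht0]
    apply Real.rpow_le_rpow_of_exponent_le (le_of_lt ht)
    simp only [Complex.neg_re, Complex.add_re, Complex.natCast_re]
    have : (0:ℝ) ≤ n := Nat.cast_nonneg n
    norm_num
  rw [norm_mul, norm_mul, norm_mul]
  exact mul_le_mul_of_nonneg_left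
    (mul_le_mul_of_nonneg_right hX (norm_nonneg _)) (norm_nonneg _)

lemma Gamma_add_nat' (x : ℂ) (hx : ∀ k : ℕ, x + (k:ℂ) ≠ 0) (n : ℕ) :
    Complex.Gamma (x + n) = (ascPochhammer ℂ n).eval x * Complex.Gamma x := by
  induction n with
  | zero => simp
  | succ n ih =>
    have h : x + ((n+1 : ℕ):ℂ) = (x + n) + 1 := by push_cast; ring
    rw [h, Complex.Gamma_add_one _ (hx n), ih, ascPochhammer_succ_eval]
    ring

lemma poch_ne_zero (x : ℂ) (hx : ∀ k : ℕ, x + (k:ℂ) ≠ 0) (n : ℕ) :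
    (ascPochhammer ℂ n).eval x ≠ 0 := by
  induction n with
  | zero => simp
  | succ n ih =>
    rw [ascPochhammer_succ_eval]
    exact mul_ne_zero ih (hx n)

/-- the Euler-type integral representation of the
hypergeometric function: for `Re a > 0`, `Re (c-a) > 0`, `|z| < 1`, the
integral `∫₁^∞ t^(b-c) (t-1)^(c-a-1) (t-z)^(-b) dt` converges and equals
`∑ Γ(a+n) Γ(c-a) (b)ₙ zⁿ / (Γ(c+n) n!)`; when `c` is not a nonpositive
integer it equals `(Γ(a)Γ(c-a)/Γ(c)) F(a,b;c;z)`. -/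
theorem hypergeometric_integral_representation (a b c z : ℂ)
    (ha : 0 < a.re) (hca : 0 < (c - a).re) (hz : ‖z‖ < 1) :
    IntegrableOn (fun t : ℝ =>
        (t : ℂ) ^ (b - c) * ((t : ℂ) - 1) ^ (c - a - 1) * ((t : ℂ) - z) ^ (-b))
      (Set.Ioi 1) ∧
    (∫ t in Set.Ioi (1 : ℝ),
        (t : ℂ) ^ (b - c) * ((t : ℂ) - 1) ^ (c - a - 1) * ((t : ℂ) - z) ^ (-b))
      = ∑' n : ℕ, Complex.Gamma (a + n) * Complex.Gamma (c - a) *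
          (ascPochhammer ℂ n).eval b * z ^ n /
          (Complex.Gamma (c + n) * (n.factorial : ℂ)) ∧
    ((∀ n : ℕ, c ≠ -(n : ℂ)) →
      (∫ t in Set.Ioi (1 : ℝ),
          (t : ℂ) ^ (b - c) * ((t : ℂ) - 1) ^ (c - a - 1) * ((t : ℂ) - z) ^ (-b))
        = Complex.Gamma a * Complex.Gamma (c - a) / Complex.Gamma c *
            ∑' n : ℕ, (ascPochhammer ℂ n).eval a * (ascPochhammer ℂ n).eval b *
              z ^ n / ((ascPochhammer ℂ n).eval c * (n.factorial : ℂ))) := by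
  have hz' : ‖z‖ < 1 := hz
  have hbeta : ∀ n : ℕ,
      IntegrableOn (fun t : ℝ => (t:ℂ) ^ (-(c+(n:ℂ))) * ((t:ℂ) - 1) ^ (c-a-1)) (Set.Ioi 1) ∧
      (∫ t in Set.Ioi (1:ℝ), (t:ℂ) ^ (-(c+(n:ℂ))) * ((t:ℂ) - 1) ^ (c-a-1))
        = Complex.Gamma (a+n) * Complex.Gamma (c-a) / Complex.Gamma (c+n) := by
    intro n
    have h1 : 0 < (a + (n:ℂ)).re := by
      rw [Complex.add_re, Complex.natCast_re]
      have : (0:ℝ) ≤ n := Nat.cast_nonneg n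
      linarith
    have h := betaIoi (a + n) (c - a) h1 hca
    rw [show a + (n:ℂ) + (c - a) = c + n from by ring] at h
    exact h
  have hTint : ∀ n : ℕ, IntegrableOn (fun t : ℝ =>
      (ascPochhammer ℂ n).eval b * z ^ n / n.factorial *
        ((t:ℂ) ^ (-(c+(n:ℂ))) * ((t:ℂ) - 1) ^ (c-a-1))) (Set.Ioi 1) :=
    fun n => (hbeta n).1.const_mul _
  have hTval : ∀ n : ℕ, (∫ t in Set.Ioi (1:ℝ),
      (ascPochhammer ℂ n).eval b * z ^ n / n.factorial *
        ((t:ℂ) ^ (-(c+(n:ℂ))) * ((t:ℂ) - 1) ^ (c-a-1)))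
      = (ascPochhammer ℂ n).eval b * z ^ n / n.factorial *
        (Complex.Gamma (a+n) * Complex.Gamma (c-a) / Complex.Gamma (c+n)) := by
    intro n
    rw [MeasureTheory.integral_const_mul, (hbeta n).2]
  have hMfin : (∫⁻ t in Set.Ioi (1:ℝ),
      ‖(t:ℂ) ^ (-(c+((0:ℕ):ℂ))) * ((t:ℂ) - 1) ^ (c-a-1)‖₊) ≠ ⊤ :=
    (hbeta 0).1.2.ne
  have hcoefsum := hyper_coef_norm_summable b z hz'
  have hlint : ∀ n : ℕ, (∫⁻ t in Set.Ioi (1:ℝ),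
      ‖(ascPochhammer ℂ n).eval b * z ^ n / n.factorial *
        ((t:ℂ) ^ (-(c+(n:ℂ))) * ((t:ℂ) - 1) ^ (c-a-1))‖₊)
      ≤ (‖(ascPochhammer ℂ n).eval b * z ^ n / n.factorial‖₊ : ℝ≥0∞) *
        (∫⁻ t in Set.Ioi (1:ℝ), ‖(t:ℂ) ^ (-(c+((0:ℕ):ℂ))) * ((t:ℂ) - 1) ^ (c-a-1)‖₊) := by
    intro n
    have hae : ∀ᵐ (t : ℝ) ∂(volume.restrict (Set.Ioi (1:ℝ))),
        (‖(ascPochhammer ℂ n).eval b * z ^ n / n.factorial *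
          ((t:ℂ) ^ (-(c+(n:ℂ))) * ((t:ℂ) - 1) ^ (c-a-1))‖₊ : ℝ≥0∞)
        ≤ (‖(ascPochhammer ℂ n).eval b * z ^ n / n.factorial‖₊ : ℝ≥0∞) *
          ‖(t:ℂ) ^ (-(c+((0:ℕ):ℂ))) * ((t:ℂ) - 1) ^ (c-a-1)‖₊ := by
      rw [ae_restrict_iff' measurableSet_Ioi]
      apply Filter.Eventually.of_forall
      intro t ht
      have hb := hyper_norm_bound a b c z n ht
      rw [← ENNReal.coe_mul]
      exact_mod_cast hb
    calc (∫⁻ t in Set.Ioi (1:ℝ),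
        ‖(ascPochhammer ℂ n).eval b * z ^ n / n.factorial *
          ((t:ℂ) ^ (-(c+(n:ℂ))) * ((t:ℂ) - 1) ^ (c-a-1))‖₊)
        ≤ ∫⁻ t in Set.Ioi (1:ℝ),
          (‖(ascPochhammer ℂ n).eval b * z ^ n / n.factorial‖₊ : ℝ≥0∞) *
            ‖(t:ℂ) ^ (-(c+((0:ℕ):ℂ))) * ((t:ℂ) - 1) ^ (c-a-1)‖₊ := lintegral_mono_ae hae
      _ = _ := lintegral_const_mul' _ _ ENNReal.coe_ne_top
  have hsum_lint : (∑' n : ℕ, ∫⁻ t in Set.Ioi (1:ℝ),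
      ‖(ascPochhammer ℂ n).eval b * z ^ n / n.factorial *
        ((t:ℂ) ^ (-(c+(n:ℂ))) * ((t:ℂ) - 1) ^ (c-a-1))‖₊) ≠ ⊤ := by
    apply ne_top_of_le_ne_top ?_ (ENNReal.tsum_le_tsum hlint)
    rw [ENNReal.tsum_mul_right]
    apply ENNReal.mul_ne_top ?_ hMfin
    rw [ENNReal.tsum_coe_ne_top_iff_summable, ← NNReal.summable_coe]
    simpa only [coe_nnnorm] using hcoefsum
  have hswap := MeasureTheory.integral_tsum (μ := volume.restrict (Set.Ioi (1:ℝ)))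
    (fun n => (hTint n).aestronglyMeasurable) hsum_lint
  have hcongr : (∫ t in Set.Ioi (1:ℝ),
      (t:ℂ) ^ (b-c) * ((t:ℂ) - 1) ^ (c-a-1) * ((t:ℂ) - z) ^ (-b))
      = ∫ t in Set.Ioi (1:ℝ), ∑' n : ℕ,
        (ascPochhammer ℂ n).eval b * z ^ n / n.factorial *
          ((t:ℂ) ^ (-(c+(n:ℂ))) * ((t:ℂ) - 1) ^ (c-a-1)) :=
    setIntegral_congr_fun measurableSet_Ioi
      (fun t ht => ((hyper_pt a b c z hz' ht).tsum_eq).symm)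
  have hval2 : (∫ t in Set.Ioi (1:ℝ),
      (t:ℂ) ^ (b-c) * ((t:ℂ) - 1) ^ (c-a-1) * ((t:ℂ) - z) ^ (-b))
      = ∑' n : ℕ, Complex.Gamma (a + n) * Complex.Gamma (c - a) *
          (ascPochhammer ℂ n).eval b * z ^ n /
          (Complex.Gamma (c + n) * (n.factorial : ℂ)) := by
    rw [hcongr, hswap]
    apply tsum_congr
    intro n
    rw [hTval n, div_mul_div_comm]
    congr 1
    · ring
    · ring
  -- integrability
  have hcont : ContinuousOn (fun t : ℝ =>
      (t:ℂ) ^ (b-c) * ((t:ℂ) - 1) ^ (c-a-1) * ((t:ℂ) - z) ^ (-b)) (Set.Ioi 1) := by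
    intro t ht
    have ht1 : (1:ℝ) < t := ht
    apply ContinuousAt.continuousWithinAt
    have h1 : ContinuousAt (fun t : ℝ => (t:ℂ) ^ (b-c)) t := by
      apply (continuousAt_cpow_const ?_).comp Complex.continuous_ofReal.continuousAt
      rw [Complex.mem_slitPlane_iff]
      left
      simpa using lt_trans one_pos ht1
    have h2 : ContinuousAt (fun t : ℝ => ((t:ℂ) - 1) ^ (c-a-1)) t := by
      apply (continuousAt_cpow_const ?_).comp
        ((Complex.continuous_ofReal.sub continuous_const).continuousAt)
      rw [Complex.mem_slitPlane_iff]
      left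
      simp only [Pi.sub_apply, Complex.sub_re, Complex.one_re, Complex.ofReal_re]
      linarith
    have h3 : ContinuousAt (fun t : ℝ => ((t:ℂ) - z) ^ (-b)) t := by
      apply (continuousAt_cpow_const ?_).comp
        ((Complex.continuous_ofReal.sub continuous_const).continuousAt)
      rw [Complex.mem_slitPlane_iff]
      left
      simp only [Pi.sub_apply, Complex.sub_re, Complex.ofReal_re]
      have hzre : z.re ≤ ‖z‖ := (le_abs_self z.re).trans (Complex.abs_re_le_norm z)
      linarith
    exact (h1.mul h2).mul h3
  have hbound : ∀ t ∈ Set.Ioi (1:ℝ),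
      ‖(t:ℂ) ^ (b-c) * ((t:ℂ) - 1) ^ (c-a-1) * ((t:ℂ) - z) ^ (-b)‖
      ≤ (∑' n : ℕ, ‖(ascPochhammer ℂ n).eval b * z ^ n / n.factorial‖) *
        ‖(t:ℂ) ^ (-(c+((0:ℕ):ℂ))) * ((t:ℂ) - 1) ^ (c-a-1)‖ := by
    intro t ht
    have ht1 : (1:ℝ) < t := ht
    have hsum := hyper_pt a b c z hz' ht1
    have hnsum : Summable (fun n : ℕ => ‖(ascPochhammer ℂ n).eval b * z ^ n / n.factorial *
        ((t:ℂ) ^ (-(c+(n:ℂ))) * ((t:ℂ) - 1) ^ (c-a-1))‖) :=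
      Summable.of_nonneg_of_le (fun n => norm_nonneg _)
        (fun n => hyper_norm_bound a b c z n ht1)
        (hcoefsum.mul_right _)
    rw [← hsum.tsum_eq]
    calc ‖∑' n : ℕ, (ascPochhammer ℂ n).eval b * z ^ n / n.factorial *
          ((t:ℂ) ^ (-(c+(n:ℂ))) * ((t:ℂ) - 1) ^ (c-a-1))‖
        ≤ ∑' n : ℕ, ‖(ascPochhammer ℂ n).eval b * z ^ n / n.factorial *
          ((t:ℂ) ^ (-(c+(n:ℂ))) * ((t:ℂ) - 1) ^ (c-a-1))‖ := norm_tsum_le_tsum_norm hnsum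
      _ ≤ ∑' n : ℕ, ‖(ascPochhammer ℂ n).eval b * z ^ n / n.factorial‖ *
          ‖(t:ℂ) ^ (-(c+((0:ℕ):ℂ))) * ((t:ℂ) - 1) ^ (c-a-1)‖ :=
          Summable.tsum_le_tsum (fun n => hyper_norm_bound a b c z n ht1) hnsum (hcoefsum.mul_right _)
      _ = _ := tsum_mul_right
  have hint : IntegrableOn (fun t : ℝ =>
      (t:ℂ) ^ (b-c) * ((t:ℂ) - 1) ^ (c-a-1) * ((t:ℂ) - z) ^ (-b)) (Set.Ioi 1) := by
    apply Integrable.mono' (((hbeta 0).1.norm).const_mul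
      (∑' n : ℕ, ‖(ascPochhammer ℂ n).eval b * z ^ n / n.factorial‖))
      (hcont.aestronglyMeasurable measurableSet_Ioi)
    rw [ae_restrict_iff' measurableSet_Ioi]
    exact Filter.Eventually.of_forall hbound
  refine ⟨hint, hval2, ?_⟩
  -- part 3
  intro hc
  rw [hval2, ← tsum_mul_left]
  apply tsum_congr
  intro n
  have hane : ∀ k : ℕ, a + (k:ℂ) ≠ 0 := by
    intro k h
    have : (a + (k:ℂ)).re = 0 := by rw [h]; simp
    rw [Complex.add_re, Complex.natCast_re] at this
    have : (0:ℝ) ≤ k := Nat.cast_nonneg k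
    linarith
  have hcne : ∀ k : ℕ, c + (k:ℂ) ≠ 0 := by
    intro k h
    exact hc k (by linear_combination h)
  have hGa := Gamma_add_nat' a hane n
  have hGc := Gamma_add_nat' c hcne n
  have hPc := poch_ne_zero c hcne n
  have hGcne : Complex.Gamma c ≠ 0 := Complex.Gamma_ne_zero (fun m => hc m)
  have hGcnne : Complex.Gamma (c+n) ≠ 0 := by
    rw [hGc]
    exact mul_ne_zero hPc hGcne
  have hfac : ((n.factorial:ℂ)) ≠ 0 := by exact_mod_cast n.factorial_ne_zero
  rw [hGa, hGc]
  field_simp
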